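/- Let β = (β_n) be a Cantor real base and a ∈ ℕ^ℕ with val_β(a) ≤ 1. Then a ≤_lex d_β(1), where d_β(1) is the greedy β-expansion of 1. -/

import Mathlib

open Filter

/-- Product of the first `n+1` terms of the base sequence. -/
noncomputable def cprod (β : ℕ → ℝ) (n : ℕ) : ℝ := ∏ i ∈ Finset.range (n+1), β i

/-- A Cantor real base: all terms exceed 1 and the partial products tend to infinity. -/
def IsCantorBase (β : ℕ → ℝ) : Prop :=
  (∀ n, 1 < β n) ∧ Tendsto (cprod β) atTop atTop

/-- Value of a real-digit sequence in a Cantor base. -/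
noncomputable def valB (β : ℕ → ℝ) (a : ℕ → ℝ) : ℝ := ∑' n, a n / cprod β n

/-- Value of a natural-digit sequence in a Cantor base. -/
noncomputable def valN (β : ℕ → ℝ) (a : ℕ → ℕ) : ℝ := valB β (fun n => (a n : ℝ))

/-- Remainders of the greedy algorithm. -/
noncomputable def greedyRem (β : ℕ → ℝ) (x : ℝ) : ℕ → ℝ
  | 0 => β 0 * x - ⌊β 0 * x⌋
  | n+1 => β (n+1) * greedyRem β x n - ⌊β (n+1) * greedyRem β x n⌋

/-- Digits of the greedy expansion. -/
noncomputable def greedy (β : ℕ → ℝ) (x : ℝ) : ℕ → ℕ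
  | 0 => (⌊β 0 * x⌋).toNat
  | n+1 => (⌊β (n+1) * greedyRem β x n⌋).toNat

/-- Remainders of the quasi-greedy algorithm started at `1`:
at each step the largest digit keeping the remainder strictly positive is chosen. -/
noncomputable def qRem (β : ℕ → ℝ) : ℕ → ℝ
  | 0 => β 0 - (⌈β 0⌉ - 1)
  | n+1 => β (n+1) * qRem β n - (⌈β (n+1) * qRem β n⌉ - 1)

/-- Digits of the quasi-greedy expansion of `1`. -/
noncomputable def quasiGreedy (β : ℕ → ℝ) : ℕ → ℕ
  | 0 => (⌈β 0⌉ - 1).toNat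
  | n+1 => (⌈β (n+1) * qRem β n⌉ - 1).toNat

/-- The `n`-shifted base `β^{(n)}`. -/
def shiftBase (β : ℕ → ℝ) (n : ℕ) : ℕ → ℝ := fun k => β (n + k)

/-- The `n`-fold shift `σ^n` of a digit sequence. -/
def shiftSeq (a : ℕ → ℕ) (n : ℕ) : ℕ → ℕ := fun k => a (n + k)

/-- Strict lexicographic order on digit sequences. -/
def LexLt (a b : ℕ → ℕ) : Prop := ∃ ℓ, (∀ k, k < ℓ → a k = b k) ∧ a ℓ < b ℓ

/-- Lexicographic order on digit sequences. -/
def LexLe (a b : ℕ → ℕ) : Prop := LexLt a b ∨ a = b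

/-- The set of greedy expansions of points of `[0,1)`. -/
def Dset (β : ℕ → ℝ) : Set (ℕ → ℕ) := {a | ∃ x ∈ Set.Ico (0:ℝ) 1, a = greedy β x}

lemma cprod_pos' {β : ℕ → ℝ} (hβ : ∀ n, 1 < β n) (n : ℕ) : 0 < cprod β n :=
  Finset.prod_pos fun i _ => lt_trans one_pos (hβ i)

lemma rem_nonneg' {β : ℕ → ℝ} (n : ℕ) : 0 ≤ greedyRem β 1 n := by
  cases n with
  | zero => exact sub_nonneg.mpr (Int.floor_le _)
  | succ n => exact sub_nonneg.mpr (Int.floor_le _)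

lemma rem_lt_one' {β : ℕ → ℝ} (n : ℕ) : greedyRem β 1 n < 1 := by
  cases n with
  | zero =>
    have := Int.lt_floor_add_one (β 0 * 1)
    simp only [greedyRem]; linarith
  | succ n =>
    have := Int.lt_floor_add_one (β (n+1) * greedyRem β 1 n)
    simp only [greedyRem]; linarith

lemma greedy_cast' {β : ℕ → ℝ} (hβ : ∀ n, 1 < β n) :
    ∀ n, (greedy β 1 n : ℝ) =
      ((⌊match n with
        | 0 => β 0 * 1
        | n+1 => β (n+1) * greedyRem β 1 n⌋ : ℤ) : ℝ) := by
  intro n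
  cases n with
  | zero =>
    simp only [greedy]
    exact_mod_cast Int.toNat_of_nonneg (Int.floor_nonneg.mpr (by nlinarith [hβ 0]))
  | succ n =>
    simp only [greedy]
    exact_mod_cast Int.toNat_of_nonneg (Int.floor_nonneg.mpr
      (mul_nonneg (le_of_lt (lt_trans one_pos (hβ (n+1)))) (rem_nonneg' n)))

lemma greedy_invariant' {β : ℕ → ℝ} (hβ : ∀ n, 1 < β n) (n : ℕ) :
    ∑ k ∈ Finset.range (n+1), (greedy β 1 k : ℝ) / cprod β k
      + greedyRem β 1 n / cprod β n = 1 := by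
  induction n with
  | zero =>
    have hc : cprod β 0 = β 0 := by simp [cprod]
    have hb0 : (0:ℝ) < β 0 := lt_trans one_pos (hβ 0)
    rw [Finset.sum_range_one, greedy_cast' hβ 0]
    simp only [greedyRem, hc]
    field_simp
    ring
  | succ n ih =>
    have hcs : cprod β (n+1) = cprod β n * β (n+1) := Finset.prod_range_succ _ _
    have hb : (0:ℝ) < β (n+1) := lt_trans one_pos (hβ (n+1))
    have hP : (0:ℝ) < cprod β n := cprod_pos' hβ n
    rw [Finset.sum_range_succ, greedy_cast' hβ (n+1)]
    simp only [greedyRem, hcs]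
    have : greedyRem β 1 n / cprod β n
        = ((⌊β (n+1) * greedyRem β 1 n⌋ : ℝ)
          + (β (n+1) * greedyRem β 1 n - ⌊β (n+1) * greedyRem β 1 n⌋))
            / (cprod β n * β (n+1)) := by
      field_simp
      ring
    linarith [ih, this, add_div ((⌊β (n+1) * greedyRem β 1 n⌋ : ℝ))
      (β (n+1) * greedyRem β 1 n - ⌊β (n+1) * greedyRem β 1 n⌋)
      (cprod β n * β (n+1))]

theorem stmt_9 (β : ℕ → ℝ) (hβ : IsCantorBase β) (a : ℕ → ℕ)
    (hsum : Summable (fun n => (a n : ℝ) / cprod β n)) (hval : valN β a ≤ 1) :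
    LexLe a (greedy β 1) := by
  classical
  by_cases h : a = greedy β 1
  · exact Or.inr h
  left
  have hβ1 := hβ.1
  have hex : ∃ n, a n ≠ greedy β 1 n := by
    by_contra hc; push_neg at hc; exact h (funext hc)
  set ℓ := Nat.find hex with hℓ
  have hne : a ℓ ≠ greedy β 1 ℓ := Nat.find_spec hex
  have hlt : ∀ k, k < ℓ → a k = greedy β 1 k := fun k hk =>
    not_not.1 (Nat.find_min hex hk)
  rcases lt_or_gt_of_ne hne with hl | hg
  · exact ⟨ℓ, hlt, hl⟩
  exfalso
  have hP := cprod_pos' hβ1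
  have hpart : ∑ k ∈ Finset.range (ℓ+1), (a k : ℝ) / cprod β k ≤ valN β a :=
    Summable.sum_le_tsum _ (fun i _ => div_nonneg (Nat.cast_nonneg _) (hP i).le) hsum
  have hinv := greedy_invariant' hβ1 ℓ
  have hr := rem_lt_one' (β := β) ℓ
  have hg' : (greedy β 1 ℓ : ℝ) + 1 ≤ (a ℓ : ℝ) := by exact_mod_cast hg
  have hsplit : ∑ k ∈ Finset.range (ℓ+1), (a k : ℝ) / cprod β k
      = ∑ k ∈ Finset.range (ℓ+1), (greedy β 1 k : ℝ) / cprod β k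
        + ((a ℓ : ℝ) - (greedy β 1 ℓ : ℝ)) / cprod β ℓ := by
    rw [Finset.sum_range_succ, Finset.sum_range_succ,
      Finset.sum_congr rfl (fun k hk => by rw [hlt k (Finset.mem_range.1 hk)])]
    rw [sub_div]
    ring
  have hstep : greedyRem β 1 ℓ / cprod β ℓ
      < ((a ℓ : ℝ) - (greedy β 1 ℓ : ℝ)) / cprod β ℓ := by
    have : greedyRem β 1 ℓ < (a ℓ : ℝ) - (greedy β 1 ℓ : ℝ) := by linarith
    exact (div_lt_div_iff_of_pos_right (hP ℓ)).mpr this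
  linarith
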